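/- Fix m ≥ 1, d ≥ 1, n ≥ 0 and ω = exp(2πi/d). The assignment sending Π to the tuple (A₁, …, Aₙ) with A_i = ∑_{a ∈ (ZMod d)^n} ω^{a_i} · Π(a) is a bijection from the set of projective measurements Π : (ZMod d)^n → M_m(ℂ) — i.e., functions such that each Π(a) is a Hermitian idempotent, Π(a)·Π(a') = 0 for a ≠ a', and ∑_a Π(a) = 1 — onto the set of n-tuples (A₁, …, Aₙ) of pairwise commuting m×m complex unitary matrices with A_i^d = 1 for all i. The inverse sends (A₁, …, Aₙ) to the simultaneous spectral projections, where Π(a) projects onto the joint eigenspace with eigenvalues (ω^{a₁}, …, ω^{aₙ}). (This is the level-n statement of the simplicial isomorphism N(Z_d, U(H)) ≅ P_H N(Z_d) induced by spectral decomposition.) -/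

import Mathlib

open Matrix Finset

/-- The primitive `d`-th root of unity `ω = exp(2πi/d)`. -/
noncomputable def rootOfUnity' (d : ℕ) : ℂ :=
  Complex.exp (2 * Real.pi * Complex.I / d)

section Chi

variable {d : ℕ} [NeZero d]

/-- character value -/
noncomputable def chi (d : ℕ) (a : ZMod d) : ℂ := rootOfUnity' d ^ a.val

lemma hroot : IsPrimitiveRoot (rootOfUnity' d) d :=
  Complex.isPrimitiveRoot_exp d (NeZero.ne d)

lemma root_pow_d : (rootOfUnity' d) ^ d = 1 := hroot.pow_eq_one

lemma pow_mod_eq {M : Type*} [Monoid M] {x : M} {d : ℕ} (hx : x ^ d = 1) (u : ℕ) :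
    x ^ (u % d) = x ^ u := by
  conv_rhs => rw [← Nat.mod_add_div u d]
  rw [pow_add, pow_mul, hx, one_pow, mul_one]

lemma pow_val_add {M : Type*} [Monoid M] {x : M} (hx : x ^ d = 1) (a b : ZMod d) :
    x ^ (a + b).val = x ^ a.val * x ^ b.val := by
  rw [ZMod.val_add, pow_mod_eq hx, pow_add]

lemma pow_val_mul {M : Type*} [Monoid M] {x : M} (hx : x ^ d = 1) (a b : ZMod d) :
    x ^ (a * b).val = (x ^ a.val) ^ b.val := by
  rw [ZMod.val_mul, pow_mod_eq hx, pow_mul]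

lemma chi_add (a b : ZMod d) : chi d (a + b) = chi d a * chi d b :=
  pow_val_add root_pow_d a b

omit [NeZero d] in
lemma chi_zero : chi d 0 = 1 := by simp [chi, ZMod.val_zero]

lemma chi_pow_d (a : ZMod d) : (chi d a) ^ d = 1 := by
  rw [chi, ← pow_mul, mul_comm, pow_mul, root_pow_d, one_pow]

lemma chi_mul_neg (a : ZMod d) : chi d a * chi d (-a) = 1 := by
  rw [← chi_add]; simp [chi_zero]

lemma chi_ne_one {a : ZMod d} (ha : a ≠ 0) : chi d a ≠ 1 :=
  hroot.pow_ne_one_of_pos_of_lt (ZMod.val_pos.2 ha).ne' (ZMod.val_lt a)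

lemma chi_inj {a b : ZMod d} (h : chi d a = chi d b) : a = b := by
  have := hroot.pow_inj (ZMod.val_lt a) (ZMod.val_lt b) h
  exact ZMod.val_injective d this

lemma star_root : star (rootOfUnity' d) = (rootOfUnity' d)⁻¹ := by
  show (starRingEnd ℂ) _ = _
  rw [rootOfUnity', ← Complex.exp_conj, ← Complex.exp_neg]
  congr 1
  rw [map_div₀]
  rw [show (starRingEnd ℂ) (2 * ↑Real.pi * Complex.I) = -(2 * ↑Real.pi * Complex.I) by
    rw [_root_.map_mul, _root_.map_mul, Complex.conj_I]
    simp [Complex.conj_ofReal, map_ofNat]]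
  rw [show (starRingEnd ℂ) (d : ℂ) = (d : ℂ) by simp]
  ring

lemma star_chi (a : ZMod d) : star (chi d a) = chi d (-a) := by
  rw [chi, star_pow, star_root, inv_pow]
  exact inv_eq_of_mul_eq_one_left (by
    show chi d (-a) * chi d a = 1
    rw [← chi_add]; simp [chi_zero])

lemma sum_chi (x : ZMod d) : ∑ k : ZMod d, chi d (x * k) = if x = 0 then (d : ℂ) else 0 := by
  split_ifs with h
  · subst h
    simp only [zero_mul, chi_zero, Finset.sum_const, nsmul_eq_mul, mul_one]
    rw [Finset.card_univ, ZMod.card]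
  · have h1 : ∀ k : ZMod d, chi d (x * k) = (chi d x) ^ k.val := fun k =>
      pow_val_mul root_pow_d x k
    calc ∑ k : ZMod d, chi d (x * k) = ∑ j ∈ Finset.range d, (chi d x) ^ j := by
          refine Finset.sum_nbij' (fun k => k.val) (fun j => (j : ZMod d)) ?_ ?_ ?_ ?_ ?_
          · intro a _; exact Finset.mem_range.2 (ZMod.val_lt a)
          · intro a _; exact Finset.mem_univ _
          · intro a _; exact ZMod.natCast_rightInverse a
          · intro a ha; exact ZMod.val_cast_of_lt (Finset.mem_range.1 ha)
          · intro a _; exact h1 a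
      _ = 0 := by
          rw [geom_sum_eq (chi_ne_one h), chi_pow_d, sub_self, zero_div]

end Chi

section Spectral

variable {m d : ℕ} [NeZero d]

/-- Spectral projection of a `d`-torsion unitary onto the `ω^k` eigenspace. -/
noncomputable def sproj (d : ℕ) [NeZero d] {m : ℕ} (U : Matrix (Fin m) (Fin m) ℂ)
    (k : ZMod d) : Matrix (Fin m) (Fin m) ℂ :=
  (d : ℂ)⁻¹ • ∑ j : ZMod d, chi d (-(k * j)) • U ^ j.val

variable {U : Matrix (Fin m) (Fin m) ℂ}

lemma dC_ne_zero : (d : ℂ) ≠ 0 := Nat.cast_ne_zero.2 (NeZero.ne d)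

lemma sum_if_smul {c : ℂ} {X : ZMod d → Matrix (Fin m) (Fin m) ℂ} (t : ZMod d) :
    ∑ j : ZMod d, (if j = t then c else 0) • X j = c • X t := by
  rw [Finset.sum_eq_single t]
  · simp
  · intro b _ hb; simp [hb]
  · intro h; exact absurd (Finset.mem_univ t) h

lemma pow_mul_expand (hU : U ^ d = 1) (f g : ZMod d → ℂ) :
    (∑ j : ZMod d, f j • U ^ j.val) * (∑ j : ZMod d, g j • U ^ j.val)
      = ∑ t : ZMod d, (∑ j : ZMod d, f j * g (t - j)) • U ^ t.val := by
  rw [Finset.sum_mul_sum]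
  have h1 : ∀ j : ZMod d, ∑ j' : ZMod d, (f j • U ^ j.val) * (g j' • U ^ j'.val)
      = ∑ t : ZMod d, (f j * g (t - j)) • U ^ t.val := by
    intro j
    refine Fintype.sum_bijective (fun j' => j + j') (Equiv.addLeft j).bijective _ _ ?_
    intro j'
    rw [smul_mul_smul_comm, ← pow_val_add hU, add_sub_cancel_left]
  rw [Finset.sum_congr rfl fun j _ => h1 j, Finset.sum_comm]
  exact Finset.sum_congr rfl fun t _ => (Finset.sum_smul).symm

lemma sproj_sum (hU : U ^ d = 1) : ∑ k : ZMod d, sproj d U k = 1 := by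
  unfold sproj
  rw [← Finset.smul_sum, Finset.sum_comm]
  have h1 : ∀ j : ZMod d, ∑ k : ZMod d, chi d (-(k * j)) • U ^ j.val
      = (if j = 0 then (d : ℂ) else 0) • U ^ j.val := by
    intro j
    rw [← Finset.sum_smul]
    congr 1
    have : ∀ k : ZMod d, -(k * j) = (-j) * k := fun k => by ring
    rw [Finset.sum_congr rfl fun k _ => congrArg (chi d) (this k), sum_chi]
    simp [neg_eq_zero]
  rw [Finset.sum_congr rfl fun j _ => h1 j, sum_if_smul, ZMod.val_zero, pow_zero, smul_smul,
    inv_mul_cancel₀ dC_ne_zero, one_smul]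

lemma sproj_mul (hU : U ^ d = 1) (k k' : ZMod d) :
    sproj d U k * sproj d U k' = if k = k' then sproj d U k else 0 := by
  unfold sproj
  rw [smul_mul_smul_comm, pow_mul_expand hU]
  have h1 : ∀ t : ZMod d, ∑ j : ZMod d, chi d (-(k * j)) * chi d (-(k' * (t - j)))
      = if k = k' then (d : ℂ) * chi d (-(k' * t)) else 0 := by
    intro t
    have e1 : ∀ j : ZMod d, chi d (-(k * j)) * chi d (-(k' * (t - j)))
        = chi d (-(k' * t)) * chi d ((k' - k) * j) := by
      intro j
      rw [← chi_add, ← chi_add]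
      congr 1
      ring
    rw [Finset.sum_congr rfl fun j _ => e1 j, ← Finset.mul_sum, sum_chi]
    by_cases h : k = k'
    · simp [h, mul_comm]
    · have h' : k' - k ≠ 0 := sub_ne_zero.2 (Ne.symm h)
      simp [h, h']
  rw [Finset.sum_congr rfl fun t _ => congrArg (· • U ^ t.val) (h1 t)]
  by_cases h : k = k'
  · subst h
    simp only [if_true]
    have : ∀ t : ZMod d, ((d : ℂ) * chi d (-(k * t))) • U ^ t.val
        = (d : ℂ) • chi d (-(k * t)) • U ^ t.val := fun t => by rw [smul_smul]
    rw [Finset.sum_congr rfl fun t _ => this t, ← Finset.smul_sum, smul_smul]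
    congr 1
    field_simp
  · simp [h]

lemma star_unitary_pow (hU : U ^ d = 1) (hsU : star U * U = 1) :
    star U = U ^ ((-1 : ZMod d)).val := by
  have hone : U ^ ((1 : ZMod d)).val = U := by
    rw [ZMod.val_one_eq_one_mod, pow_mod_eq hU, pow_one]
  have h2 : U * U ^ ((-1 : ZMod d)).val = 1 := by
    nth_rewrite 1 [← hone]
    rw [← pow_val_add hU]
    simp
  calc star U = star U * (U * U ^ ((-1 : ZMod d)).val) := by rw [h2, mul_one]
    _ = (star U * U) * U ^ ((-1 : ZMod d)).val := by rw [mul_assoc]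
    _ = U ^ ((-1 : ZMod d)).val := by rw [hsU, one_mul]

lemma sproj_star (hU : U ^ d = 1) (hsU : star U * U = 1) (k : ZMod d) :
    star (sproj d U k) = sproj d U k := by
  unfold sproj
  rw [star_smul, star_sum]
  have h1 : ∀ j : ZMod d, star (chi d (-(k * j)) • U ^ j.val)
      = chi d (-(k * (-j))) • U ^ ((-j) : ZMod d).val := by
    intro j
    rw [star_smul, star_pow, star_chi, star_unitary_pow hU hsU, ← pow_val_mul hU]
    congr 2
    · ring
    · ring
  rw [Finset.sum_congr rfl fun j _ => h1 j]
  congr 1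
  · simp
  · exact Fintype.sum_bijective (fun j => -j) neg_involutive.bijective _ _
      (fun j => rfl)

lemma sproj_apply_chi (hU : U ^ d = 1) :
    ∑ k : ZMod d, chi d k • sproj d U k = U := by
  unfold sproj
  have h0 : ∀ k : ZMod d, chi d k • ((d : ℂ)⁻¹ • ∑ j : ZMod d, chi d (-(k * j)) • U ^ j.val)
      = (d : ℂ)⁻¹ • ∑ j : ZMod d, chi d ((1 - j) * k) • U ^ j.val := by
    intro k
    rw [smul_comm, Finset.smul_sum]
    congr 1
    refine Finset.sum_congr rfl fun j _ => ?_
    rw [smul_smul, ← chi_add]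
    exact congrArg (· • U ^ j.val) (congrArg (chi d) (by ring))
  rw [Finset.sum_congr rfl fun k _ => h0 k, ← Finset.smul_sum, Finset.sum_comm]
  have h1 : ∀ j : ZMod d, ∑ k : ZMod d, chi d ((1 - j) * k) • U ^ j.val
      = (if j = 1 then (d : ℂ) else 0) • U ^ j.val := by
    intro j
    rw [← Finset.sum_smul, sum_chi]
    by_cases h : j = 1
    · simp [h]
    · have h' : 1 - j ≠ 0 := sub_ne_zero.2 (Ne.symm h)
      simp [h, h']
  rw [Finset.sum_congr rfl fun j _ => h1 j, sum_if_smul, smul_smul,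
    inv_mul_cancel₀ dC_ne_zero, one_smul, ZMod.val_one_eq_one_mod, pow_mod_eq hU, pow_one]

lemma sproj_commute {B : Matrix (Fin m) (Fin m) ℂ} (hB : B * U = U * B) (k : ZMod d) :
    B * sproj d U k = sproj d U k * B := by
  unfold sproj
  rw [mul_smul_comm, smul_mul_assoc, Finset.mul_sum, Finset.sum_mul]
  congr 1
  refine Finset.sum_congr rfl fun j _ => ?_
  rw [mul_smul_comm, smul_mul_assoc, (Commute.pow_right hB j.val).eq]

end Spectral


/-- Projective measurements on the outcome set `(ZMod d)ⁿ` with values in `m × m` complex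
matrices: each `P a` is a Hermitian idempotent, projectors of distinct outcomes are
orthogonal, and they sum to the identity. -/
def ProjectiveMeasurements (m n d : ℕ) [NeZero d] :
    Set ((Fin n → ZMod d) → Matrix (Fin m) (Fin m) ℂ) :=
  {P | (∀ a, (P a).IsHermitian ∧ P a * P a = P a) ∧
       (∀ a a', a ≠ a' → P a * P a' = 0) ∧
       (∑ a : Fin n → ZMod d, P a = 1)}

/-- `n`-tuples of pairwise commuting `m × m` complex unitary matrices of `d`-torsion. -/
def CommutingTorsionTuples (m n d : ℕ) :
    Set (Fin n → Matrix (Fin m) (Fin m) ℂ) :=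
  {A | (∀ i, A i ∈ Matrix.unitaryGroup (Fin m) ℂ ∧ (A i) ^ d = 1) ∧
       (∀ i j, A i * A j = A j * A i)}

section Meas

variable {m n d : ℕ} [NeZero d] {P : (Fin n → ZMod d) → Matrix (Fin m) (Fin m) ℂ}

lemma meas_mul_expand (hP : P ∈ ProjectiveMeasurements m n d)
    (f g : (Fin n → ZMod d) → ℂ) :
    (∑ a, f a • P a) * (∑ a, g a • P a) = ∑ a, (f a * g a) • P a := by
  rw [Finset.sum_mul_sum]
  refine Finset.sum_congr rfl fun a _ => ?_
  rw [Finset.sum_eq_single a]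
  · rw [smul_mul_smul_comm, (hP.1 a).2]
  · intro b _ hb
    rw [smul_mul_smul_comm, hP.2.1 a b (Ne.symm hb), smul_zero]
  · intro h; exact absurd (Finset.mem_univ a) h

lemma meas_star (hP : P ∈ ProjectiveMeasurements m n d) (a : Fin n → ZMod d) :
    star (P a) = P a := by
  rw [Matrix.star_eq_conjTranspose]
  exact (hP.1 a).1

lemma meas_eigen_left (hP : P ∈ ProjectiveMeasurements m n d) (i : Fin n)
    (b : Fin n → ZMod d) :
    P b * (∑ a, chi d (a i) • P a) = chi d (b i) • P b := by
  rw [Finset.mul_sum, Finset.sum_eq_single b]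
  · rw [mul_smul_comm, (hP.1 b).2]
  · intro a _ ha
    rw [mul_smul_comm, hP.2.1 b a (Ne.symm ha), smul_zero]
  · intro h; exact absurd (Finset.mem_univ b) h

lemma meas_eigen_right (hP : P ∈ ProjectiveMeasurements m n d) (i : Fin n)
    (b : Fin n → ZMod d) :
    (∑ a, chi d (a i) • P a) * P b = chi d (b i) • P b := by
  rw [Finset.sum_mul, Finset.sum_eq_single b]
  · rw [smul_mul_assoc, (hP.1 b).2]
  · intro a _ ha
    rw [smul_mul_assoc, hP.2.1 a b ha, smul_zero]
  · intro h; exact absurd (Finset.mem_univ b) h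

lemma meas_pow (hP : P ∈ ProjectiveMeasurements m n d) (i : Fin n) (t : ℕ) :
    (∑ a, chi d (a i) • P a) ^ t = ∑ a, (chi d (a i)) ^ t • P a := by
  induction t with
  | zero =>
    simp only [pow_zero, one_smul]
    exact hP.2.2.symm
  | succ t ih =>
    rw [pow_succ, ih, meas_mul_expand hP]
    refine Finset.sum_congr rfl fun a _ => ?_
    rw [pow_succ]

end Meas

lemma exists_meas (m d : ℕ) [NeZero d] :
    ∀ (n : ℕ) (A : Fin n → Matrix (Fin m) (Fin m) ℂ),
      A ∈ CommutingTorsionTuples m n d →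
      ∃ P ∈ ProjectiveMeasurements m n d,
        (∀ i, ∑ a : Fin n → ZMod d, chi d (a i) • P a = A i) ∧
        (∀ a (B : Matrix (Fin m) (Fin m) ℂ),
          (∀ i, B * A i = A i * B) → B * P a = P a * B) := by
  intro n
  induction n with
  | zero =>
    intro A _
    refine ⟨fun _ => 1, ⟨fun a => ⟨Matrix.isHermitian_one, one_mul 1⟩,
      fun a a' h => absurd (Subsingleton.elim a a') h, by simp⟩,
      fun i => i.elim0, fun a B _ => by simp⟩
  | succ n IH =>
    intro A hA
    have hAU : A 0 ∈ Matrix.unitaryGroup (Fin m) ℂ := (hA.1 0).1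
    have hUd : (A 0) ^ d = 1 := (hA.1 0).2
    have hsU : star (A 0) * A 0 = 1 := Matrix.mem_unitaryGroup_iff'.1 hAU
    have hA' : (fun i : Fin n => A i.succ) ∈ CommutingTorsionTuples m n d :=
      ⟨fun i => hA.1 i.succ, fun i j => hA.2 i.succ j.succ⟩
    obtain ⟨P₀, hP₀, hmap₀, hcomm₀⟩ := IH _ hA'
    -- sproj commutes with P₀
    have hQP : ∀ (k : ZMod d) b, sproj d (A 0) k * P₀ b = P₀ b * sproj d (A 0) k := by
      intro k b
      exact hcomm₀ b (sproj d (A 0) k)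
        (fun i => (sproj_commute (hA.2 i.succ 0) k).symm)
    -- reindexing sums over Fin (n+1) → ZMod d
    have hsum : ∀ (f : (Fin (n+1) → ZMod d) → Matrix (Fin m) (Fin m) ℂ),
        ∑ a, f a = ∑ k : ZMod d, ∑ b : Fin n → ZMod d, f (Fin.cons k b) := by
      intro f
      calc ∑ a, f a = ∑ p : ZMod d × (Fin n → ZMod d), f (Fin.cons p.1 p.2) :=
            (Fintype.sum_bijective (Fin.consEquiv (fun _ => ZMod d))
              (Fin.consEquiv _).bijective (fun p => f (Fin.cons p.1 p.2)) f
              (fun p => rfl)).symm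
        _ = ∑ k : ZMod d, ∑ b : Fin n → ZMod d, f (Fin.cons k b) := by
            rw [Fintype.sum_prod_type]
    have hprod : ∀ (k k' : ZMod d) b b',
        (sproj d (A 0) k * P₀ b) * (sproj d (A 0) k' * P₀ b')
          = (sproj d (A 0) k * sproj d (A 0) k') * (P₀ b * P₀ b') := by
      intro k k' b b'
      rw [mul_assoc, ← mul_assoc (P₀ b), ← hQP k' b]
      simp only [mul_assoc]
    refine ⟨fun a => sproj d (A 0) (a 0) * P₀ (Fin.tail a), ⟨?_, ?_, ?_⟩, ?_, ?_⟩
    · -- Hermitian & idempotent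
      intro a
      constructor
      · show (sproj d (A 0) (a 0) * P₀ (Fin.tail a)).IsHermitian
        show _ᴴ = _
        rw [← Matrix.star_eq_conjTranspose, StarMul.star_mul, meas_star hP₀,
          sproj_star hUd hsU, hQP]
      · show (sproj d (A 0) (a 0) * P₀ (Fin.tail a)) * (sproj d (A 0) (a 0) * P₀ (Fin.tail a)) = _
        rw [hprod, sproj_mul hUd, if_pos rfl, (hP₀.1 _).2]
    · -- orthogonality
      intro a a' h
      show (sproj d (A 0) (a 0) * P₀ (Fin.tail a)) * (sproj d (A 0) (a' 0) * P₀ (Fin.tail a')) = 0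
      rw [hprod]
      by_cases hk : a 0 = a' 0
      · have hb : Fin.tail a ≠ Fin.tail a' := by
          intro hb
          exact h (by rw [← Fin.cons_self_tail a, ← Fin.cons_self_tail a', hk, hb])
        rw [hP₀.2.1 _ _ hb, mul_zero]
      · rw [sproj_mul hUd, if_neg hk, zero_mul]
    · -- sum to one
      show ∑ a : Fin (n+1) → ZMod d, sproj d (A 0) (a 0) * P₀ (Fin.tail a) = 1
      rw [hsum (fun a => sproj d (A 0) (a 0) * P₀ (Fin.tail a))]
      simp only [Fin.cons_zero, Fin.tail_cons]
      rw [← Finset.sum_mul_sum, sproj_sum hUd, hP₀.2.2, one_mul]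
    · -- maps to A
      intro i
      induction i using Fin.cases with
      | zero =>
        show ∑ a : Fin (n+1) → ZMod d,
            chi d (a 0) • (sproj d (A 0) (a 0) * P₀ (Fin.tail a)) = A 0
        rw [hsum (fun a => chi d (a 0) • (sproj d (A 0) (a 0) * P₀ (Fin.tail a)))]
        simp only [Fin.cons_zero, Fin.tail_cons]
        calc ∑ k : ZMod d, ∑ b, chi d k • (sproj d (A 0) k * P₀ b)
            = ∑ k : ZMod d, ∑ b, (chi d k • sproj d (A 0) k) * P₀ b := by
              simp only [smul_mul_assoc]
          _ = (∑ k : ZMod d, chi d k • sproj d (A 0) k) * ∑ b, P₀ b := by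
              rw [Finset.sum_mul_sum]
          _ = A 0 := by rw [sproj_apply_chi hUd, hP₀.2.2, mul_one]
      | succ i =>
        show ∑ a : Fin (n+1) → ZMod d,
            chi d (a i.succ) • (sproj d (A 0) (a 0) * P₀ (Fin.tail a)) = A i.succ
        rw [hsum (fun a => chi d (a i.succ) • (sproj d (A 0) (a 0) * P₀ (Fin.tail a)))]
        simp only [Fin.cons_zero, Fin.tail_cons, Fin.cons_succ]
        calc ∑ k : ZMod d, ∑ b, chi d (b i) • (sproj d (A 0) k * P₀ b)
            = ∑ k : ZMod d, ∑ b, sproj d (A 0) k * (chi d (b i) • P₀ b) := by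
              simp only [mul_smul_comm]
          _ = (∑ k : ZMod d, sproj d (A 0) k) * ∑ b, chi d (b i) • P₀ b := by
              rw [Finset.sum_mul_sum]
          _ = A i.succ := by rw [sproj_sum hUd, hmap₀ i, one_mul]
    · -- commutant
      intro a B hB
      show B * (sproj d (A 0) (a 0) * P₀ (Fin.tail a))
        = (sproj d (A 0) (a 0) * P₀ (Fin.tail a)) * B
      rw [← mul_assoc, sproj_commute (hB 0) (a 0), mul_assoc,
        hcomm₀ (Fin.tail a) B (fun i => hB i.succ), ← mul_assoc]


/-- **Spectral decomposition as a simplicial isomorphism, level `n`:**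
the assignment `P ↦ (A₁, …, Aₙ)` with `Aᵢ = ∑_a ω^{aᵢ} • P a` is a bijection from
projective measurements on `(ZMod d)ⁿ` onto `n`-tuples of pairwise commuting `d`-torsion
unitaries; its inverse sends a tuple to its simultaneous spectral projections.  (This is
the level-`n` statement of `N(ℤ_d, U(H)) ≅ P_H N(ℤ_d)`.) -/
theorem spectral_bijection (m n d : ℕ) [NeZero d] (hm : 1 ≤ m) :
    Set.BijOn
      (fun (P : (Fin n → ZMod d) → Matrix (Fin m) (Fin m) ℂ) (i : Fin n) =>
        ∑ a : Fin n → ZMod d, (rootOfUnity' d) ^ (a i).val • P a)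
      (ProjectiveMeasurements m n d) (CommutingTorsionTuples m n d) := by
  refine ⟨?_, ?_, ?_⟩
  · -- MapsTo
    intro P hP
    refine ⟨fun i => ⟨?_, ?_⟩, ?_⟩
    · -- unitary
      rw [Matrix.mem_unitaryGroup_iff]
      show (∑ a, chi d (a i) • P a) * star (∑ a, chi d (a i) • P a) = 1
      have hstar : star (∑ a, chi d (a i) • P a) = ∑ a, chi d (-(a i)) • P a := by
        rw [star_sum]
        refine Finset.sum_congr rfl fun a _ => ?_
        rw [star_smul, star_chi, meas_star hP]
      rw [hstar, meas_mul_expand hP]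
      calc ∑ a, (chi d (a i) * chi d (-(a i))) • P a = ∑ a, P a := by
            refine Finset.sum_congr rfl fun a _ => ?_
            rw [chi_mul_neg, one_smul]
        _ = 1 := hP.2.2
    · -- torsion
      show (∑ a, chi d (a i) • P a) ^ d = 1
      rw [meas_pow hP]
      calc ∑ a, (chi d (a i)) ^ d • P a = ∑ a, P a := by
            refine Finset.sum_congr rfl fun a _ => ?_
            rw [chi_pow_d, one_smul]
        _ = 1 := hP.2.2
    · -- commuting
      intro i j
      show (∑ a, chi d (a i) • P a) * (∑ a, chi d (a j) • P a)
        = (∑ a, chi d (a j) • P a) * (∑ a, chi d (a i) • P a)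
      rw [meas_mul_expand hP, meas_mul_expand hP]
      exact Finset.sum_congr rfl fun a _ => by rw [mul_comm]
  · -- InjOn
    intro P hP P' hP' hEq
    have hA : ∀ i, (∑ a, chi d (a i) • P a) = ∑ a, chi d (a i) • P' a :=
      fun i => congrFun hEq i
    have key : ∀ x y, x ≠ y → P x * P' y = 0 := by
      intro x y hxy
      obtain ⟨i, hi⟩ := Function.ne_iff.1 hxy
      have h1 : chi d (x i) • (P x * P' y) = chi d (y i) • (P x * P' y) := by
        calc chi d (x i) • (P x * P' y)
            = (chi d (x i) • P x) * P' y := (smul_mul_assoc _ _ _).symm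
          _ = (P x * (∑ a, chi d (a i) • P a)) * P' y := by
              rw [meas_eigen_left hP]
          _ = P x * ((∑ a, chi d (a i) • P' a) * P' y) := by
              rw [hA i, mul_assoc]
          _ = P x * (chi d (y i) • P' y) := by rw [meas_eigen_right hP']
          _ = chi d (y i) • (P x * P' y) := mul_smul_comm _ _ _
      have h2 : (chi d (x i) - chi d (y i)) • (P x * P' y) = 0 := by
        rw [sub_smul, h1, sub_self]
      have h3 : chi d (x i) - chi d (y i) ≠ 0 :=
        sub_ne_zero.2 (fun h => hi (chi_inj h))
      exact (smul_eq_zero.1 h2).resolve_left h3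
    funext b
    have e1 : P b = P b * P' b := by
      conv_lhs => rw [← mul_one (P b), ← hP'.2.2]
      rw [Finset.mul_sum, Finset.sum_eq_single b]
      · intro a _ ha
        exact key b a (Ne.symm ha)
      · intro h; exact absurd (Finset.mem_univ b) h
    have e2 : P' b = P b * P' b := by
      conv_lhs => rw [← one_mul (P' b), ← hP.2.2]
      rw [Finset.sum_mul, Finset.sum_eq_single b]
      · intro a _ ha
        exact key a b ha
      · intro h; exact absurd (Finset.mem_univ b) h
    rw [e2]
    exact e1
  · -- SurjOn
    intro A hA
    obtain ⟨P, hP, hmap, -⟩ := exists_meas m d n A hA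
    exact ⟨P, hP, funext fun i => hmap i⟩
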